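/- Let P ∈ ℝ[x₁,…,xₙ] be a polynomial of degree d ≥ 1 and set f := 1 − xₙP² and ε_M := xₙP/(M(1+‖x‖²)^{d+1}). Then there exists M₀ > 0 such that for all M ≥ M₀ and all x ∈ ℝⁿ: |xₙ|·|∂f/∂xₙ(x)|·ε_M(x)² < 1/16, |xₙ·ε_M(x)| < 1/8, |ε_M(x)| < 1/2 and |∂ε_M/∂xₙ(x)| < 1/4. -/

import Mathlib

open MvPolynomial

private lemma totalDegree_pderiv_le {m : ℕ} (p : MvPolynomial (Fin m) ℝ) (i : Fin m) :
    (pderiv i p).totalDegree ≤ p.totalDegree := by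
  conv_lhs => rw [p.as_sum]
  rw [map_sum]
  refine totalDegree_finsetSum_le fun u hu => ?_
  rw [pderiv_monomial]
  refine (totalDegree_monomial_le _ _).trans (le_trans ?_ (le_totalDegree hu))
  exact Finsupp.sum_le_sum_index tsub_le_self (fun _ _ => fun _ _ h => h) (fun _ _ => rfl)

private lemma eval_hasFDerivAt {m : ℕ} (Q : MvPolynomial (Fin m) ℝ) (x : Fin m → ℝ) :
    HasFDerivAt (fun y : Fin m → ℝ => eval y Q)
      (∑ i, eval x (pderiv i Q) • (ContinuousLinearMap.proj i : (Fin m → ℝ) →L[ℝ] ℝ)) x := by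
  induction Q using MvPolynomial.induction_on with
  | C a =>
      have : (fun y : Fin m → ℝ => eval y (C a : MvPolynomial (Fin m) ℝ)) = fun _ => a := by
        funext y; simp
      rw [this]
      simpa [pderiv_C] using hasFDerivAt_const a x
  | add p q hp hq =>
      have hD : (∑ i, eval x (pderiv i (p + q)) • (ContinuousLinearMap.proj i : (Fin m → ℝ) →L[ℝ] ℝ))
          = (∑ i, eval x (pderiv i p) • (ContinuousLinearMap.proj i : (Fin m → ℝ) →L[ℝ] ℝ))
            + ∑ i, eval x (pderiv i q) • (ContinuousLinearMap.proj i : (Fin m → ℝ) →L[ℝ] ℝ) := by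
        rw [← Finset.sum_add_distrib]
        exact Finset.sum_congr rfl fun i _ => by rw [map_add, map_add, add_smul]
      have hf : (fun y : Fin m → ℝ => eval y (p + q)) = fun y => eval y p + eval y q := by
        funext y; simp
      rw [hf, hD]
      exact hp.add hq
  | mul_X p i hp =>
      have hproj : HasFDerivAt (fun y : Fin m → ℝ => y i)
          (ContinuousLinearMap.proj i : (Fin m → ℝ) →L[ℝ] ℝ) x :=
        (ContinuousLinearMap.proj i : (Fin m → ℝ) →L[ℝ] ℝ).hasFDerivAt
      have h := hp.mul hproj
      have hf : (fun y : Fin m → ℝ => eval y (p * X i)) = fun y => eval y p * y i := by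
        funext y; simp
      rw [hf]
      refine h.congr_fderiv ?_
      apply ContinuousLinearMap.ext; intro v
      simp only [ContinuousLinearMap.sum_apply, ContinuousLinearMap.smul_apply,
        ContinuousLinearMap.proj_apply, ContinuousLinearMap.add_apply, smul_eq_mul,
        pderiv_mul, map_add, eval_mul, eval_X]
      have key : ∀ j : Fin m,
          ((eval x) ((pderiv j) p) * x i + (eval x) p * (eval x) ((pderiv j) (X i))) * v j
          = x i * ((eval x) ((pderiv j) p) * v j) + (if j = i then (eval x) p * v j else 0) := by
        intro j
        by_cases h : j = i
        · subst h; simp [pderiv_X_self]; ring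
        · rw [pderiv_X_of_ne (Ne.symm h)]; simp [h]; ring
      simp only [key]
      rw [Finset.sum_add_distrib, Finset.sum_ite_eq' Finset.univ i fun j => (eval x) p * v j]
      simp only [Finset.mem_univ, if_true, ← Finset.mul_sum]
      ring

private lemma evalCLM_single {m : ℕ} (Q : MvPolynomial (Fin m) ℝ) (x : Fin m → ℝ)
    (i : Fin m) :
    (∑ j, eval x (pderiv j Q) • (ContinuousLinearMap.proj j : (Fin m → ℝ) →L[ℝ] ℝ))
      (Pi.single i 1) = eval x (pderiv i Q) := by
  simp only [ContinuousLinearMap.sum_apply, ContinuousLinearMap.smul_apply,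
    ContinuousLinearMap.proj_apply, smul_eq_mul, Pi.single_apply]
  rw [Finset.sum_congr rfl (fun j _ => by rw [mul_ite, mul_one, mul_zero]),
    Finset.sum_ite_eq' Finset.univ i fun j => eval x (pderiv j Q)]
  simp

private lemma fderiv_eval_single {m : ℕ} (Q : MvPolynomial (Fin m) ℝ) (x : Fin m → ℝ)
    (i : Fin m) :
    fderiv ℝ (fun y : Fin m → ℝ => eval y Q) x (Pi.single i 1) = eval x (pderiv i Q) := by
  rw [(eval_hasFDerivAt Q x).fderiv]
  exact evalCLM_single Q x i

private lemma poly_bound {m : ℕ} (Q : MvPolynomial (Fin m) ℝ) (N : ℕ)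
    (hQ : Q.totalDegree ≤ 2 * N) :
    ∃ C > (0:ℝ), ∀ x : Fin m → ℝ, |eval x Q| ≤ C * (1 + ∑ k, x k ^ 2) ^ N := by
  refine ⟨(∑ u ∈ Q.support, |coeff u Q|) + 1, by positivity, fun x => ?_⟩
  set s : ℝ := 1 + ∑ k, x k ^ 2 with hs
  have hs1 : (1:ℝ) ≤ s := by
    have : (0:ℝ) ≤ ∑ k, x k ^ 2 := Finset.sum_nonneg fun k _ => sq_nonneg _
    linarith
  have hs0 : (0:ℝ) ≤ s := by linarith
  have hmono : ∀ u ∈ Q.support, |∏ i ∈ u.support, x i ^ u i| ≤ s ^ N := by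
    intro u hu
    have hsq : (∏ i ∈ u.support, x i ^ u i) ^ 2 ≤ (s ^ N) ^ 2 := by
      rw [← pow_mul, ← Finset.prod_pow]
      calc ∏ i ∈ u.support, (x i ^ u i) ^ 2
          = ∏ i ∈ u.support, (x i ^ 2) ^ u i := by
            refine Finset.prod_congr rfl fun i _ => by rw [← pow_mul, ← pow_mul, Nat.mul_comm]
        _ ≤ ∏ i ∈ u.support, s ^ u i := by
            refine Finset.prod_le_prod (fun i _ => by positivity) fun i _ => ?_
            refine pow_le_pow_left₀ (sq_nonneg _) ?_ _
            have : x i ^ 2 ≤ ∑ k, x k ^ 2 :=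
              Finset.single_le_sum (fun k _ => sq_nonneg (x k)) (Finset.mem_univ i)
            linarith
        _ = s ^ (∑ i ∈ u.support, u i) := by rw [Finset.prod_pow_eq_pow_sum]
        _ ≤ s ^ (N * 2) := by
            refine pow_le_pow_right₀ hs1 ?_
            refine le_trans ?_ (by omega : Q.totalDegree ≤ N * 2)
            exact le_trans (le_of_eq rfl) (le_totalDegree hu)
    have habs : |∏ i ∈ u.support, x i ^ u i| ^ 2 ≤ (s ^ N) ^ 2 := by
      rwa [sq_abs]
    nlinarith [abs_nonneg (∏ i ∈ u.support, x i ^ u i), pow_nonneg hs0 N]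
  calc |eval x Q| = |∑ u ∈ Q.support, coeff u Q * ∏ i ∈ u.support, x i ^ u i| := by
        rw [eval_eq]
    _ ≤ ∑ u ∈ Q.support, |coeff u Q * ∏ i ∈ u.support, x i ^ u i| := Finset.abs_sum_le_sum_abs _ _
    _ ≤ ∑ u ∈ Q.support, |coeff u Q| * s ^ N := by
        refine Finset.sum_le_sum fun u hu => ?_
        rw [abs_mul]
        exact mul_le_mul_of_nonneg_left (hmono u hu) (abs_nonneg _)
    _ = (∑ u ∈ Q.support, |coeff u Q|) * s ^ N := by rw [Finset.sum_mul]
    _ ≤ ((∑ u ∈ Q.support, |coeff u Q|) + 1) * s ^ N := by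
        have : (0:ℝ) ≤ s ^ N := by positivity
        nlinarith

set_option maxHeartbeats 1000000 in
/-- For f := 1 − xₙP² and ε_M := xₙP/(M(1+‖x‖²)^{d+1}) with d = deg P ≥ 1, there
is M₀ > 0 such that for all M ≥ M₀ the four stated inequalities hold on all of ℝⁿ. -/
theorem stmt_12 (n : ℕ) (P : MvPolynomial (Fin (n + 1)) ℝ)
    (hd : 1 ≤ P.totalDegree) :
    ∃ M₀ > (0 : ℝ), ∀ M : ℝ, M₀ ≤ M → ∀ x : Fin (n + 1) → ℝ,
      (|x (Fin.last n)| *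
          |fderiv ℝ (fun y : Fin (n + 1) → ℝ => 1 - y (Fin.last n) * (eval y P) ^ 2)
            x (Pi.single (Fin.last n) 1)| *
          (x (Fin.last n) * eval x P /
            (M * (1 + ∑ k, x k ^ 2) ^ (P.totalDegree + 1))) ^ 2 < 1 / 16) ∧
      (|x (Fin.last n) *
          (x (Fin.last n) * eval x P /
            (M * (1 + ∑ k, x k ^ 2) ^ (P.totalDegree + 1)))| < 1 / 8) ∧
      (|x (Fin.last n) * eval x P /
          (M * (1 + ∑ k, x k ^ 2) ^ (P.totalDegree + 1))| < 1 / 2) ∧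
      (|fderiv ℝ
          (fun y : Fin (n + 1) → ℝ =>
            y (Fin.last n) * eval y P /
              (M * (1 + ∑ k, y k ^ 2) ^ (P.totalDegree + 1)))
          x (Pi.single (Fin.last n) 1)| < 1 / 4) := by
  classical
  set d := P.totalDegree with hdd
  set L := Fin.last n with hL
  set R : MvPolynomial (Fin (n + 1)) ℝ := X L * P with hR
  set Q₂ : MvPolynomial (Fin (n + 1)) ℝ := X L * P ^ 2 with hQ₂
  set S₁ : MvPolynomial (Fin (n + 1)) ℝ := X L * pderiv L Q₂ * R ^ 2 with hS₁
  set S₂ : MvPolynomial (Fin (n + 1)) ℝ := X L * R with hS₂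
  set T : MvPolynomial (Fin (n + 1)) ℝ := 1 + ∑ k, X k ^ 2 with hT
  have hdR : R.totalDegree ≤ d + 1 := by
    refine (totalDegree_mul _ _).trans ?_
    rw [totalDegree_X]
    omega
  have hdQ₂ : Q₂.totalDegree ≤ 2 * d + 1 := by
    refine (totalDegree_mul _ _).trans ?_
    rw [totalDegree_X]
    have := totalDegree_pow P 2
    omega
  have hdS₁ : S₁.totalDegree ≤ 2 * (2 * d + 2) := by
    refine (totalDegree_mul _ _).trans ?_
    have h1 : (X L * pderiv L Q₂ : MvPolynomial (Fin (n+1)) ℝ).totalDegree ≤ 2 * d + 2 := by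
      refine (totalDegree_mul _ _).trans ?_
      rw [totalDegree_X]
      have := (totalDegree_pderiv_le Q₂ L).trans hdQ₂
      omega
    have h2 : (R ^ 2).totalDegree ≤ 2 * (d + 1) := by
      refine (totalDegree_pow R 2).trans ?_
      omega
    omega
  have hdS₂ : S₂.totalDegree ≤ 2 * (d + 1) := by
    refine (totalDegree_mul _ _).trans ?_
    rw [totalDegree_X]
    have := hdR
    omega
  obtain ⟨C₁, hC₁pos, hC₁⟩ := poly_bound S₁ (2 * d + 2) hdS₁
  obtain ⟨C₂, hC₂pos, hC₂⟩ := poly_bound S₂ (d + 1) hdS₂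
  obtain ⟨C₃, hC₃pos, hC₃⟩ := poly_bound R (d + 1) (hdR.trans (by omega))
  obtain ⟨C₄, hC₄pos, hC₄⟩ := poly_bound (pderiv L R) (d + 1)
    (((totalDegree_pderiv_le R L).trans hdR).trans (by omega))
  set B : ℝ := C₁ + C₂ + C₃ + C₄ + (2 * (d : ℝ) + 2) * C₂ with hB
  have hBpos : 0 < B := by
    have : (0:ℝ) ≤ (2 * (d:ℝ) + 2) * C₂ := by positivity
    unfold B; linarith
  refine ⟨17 * B + 1, by linarith, fun M hM x => ?_⟩
  have hM1 : (1:ℝ) ≤ M := by nlinarith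
  have hMpos : (0:ℝ) < M := by linarith
  set s : ℝ := 1 + ∑ k, x k ^ 2 with hs
  have hs1 : (1:ℝ) ≤ s := by
    have : (0:ℝ) ≤ ∑ k, x k ^ 2 := Finset.sum_nonneg fun k _ => sq_nonneg _
    unfold s; linarith
  have hspos : (0:ℝ) < s := by linarith
  have hsd1 : (1:ℝ) ≤ s ^ (d + 1) := one_le_pow₀ hs1
  have hsd2 : (1:ℝ) ≤ s ^ (2 * d + 2) := one_le_pow₀ hs1
  have hsdpos : (0:ℝ) < s ^ (d + 1) := by positivity
  have hD : (0:ℝ) < M * s ^ (d + 1) := by positivity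
  have hpow2 : (M * s ^ (d + 1)) ^ 2 = M ^ 2 * s ^ (2 * d + 2) := by
    rw [mul_pow, ← pow_mul]
    ring_nf
  refine ⟨?_, ?_, ?_, ?_⟩
  · -- first inequality
    have hfder : fderiv ℝ (fun y : Fin (n+1) → ℝ => 1 - y L * (eval y P) ^ 2) x
        (Pi.single L 1) = -eval x (pderiv L Q₂) := by
      have hfun : (fun y : Fin (n+1) → ℝ => 1 - y L * (eval y P) ^ 2)
          = fun y => eval y ((1 : MvPolynomial (Fin (n+1)) ℝ) - Q₂) := by
        funext y; simp [hQ₂]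
      rw [hfun, fderiv_eval_single]
      rw [map_sub, pderiv_one, zero_sub, map_neg]
    rw [hfder, abs_neg, div_pow, ← mul_div_assoc, div_lt_iff₀ (by positivity)]
    have hxS : eval x S₁ = x L * eval x (pderiv L Q₂) * (x L * eval x P) ^ 2 := by
      simp [hS₁, hR]
    have habs : |x L| * |eval x (pderiv L Q₂)| * (x L * eval x P) ^ 2 = |eval x S₁| := by
      rw [hxS, abs_mul, abs_mul, abs_pow, sq_abs]
    rw [habs, hpow2]
    have h1 := hC₁ x
    have h16 : 16 * C₁ < M := by
      have h0 : (0:ℝ) ≤ (2 * (d:ℝ) + 2) * C₂ := by positivity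
      rw [hB] at hM; nlinarith
    have step1 : 16 * C₁ * s ^ (2 * d + 2) < M * s ^ (2 * d + 2) := by nlinarith
    have step2 : M * s ^ (2 * d + 2) ≤ M ^ 2 * s ^ (2 * d + 2) := by nlinarith
    linarith
  · -- second inequality
    have hre : x L * (x L * eval x P / (M * s ^ (d + 1)))
        = eval x S₂ / (M * s ^ (d + 1)) := by
      rw [hS₂, hR]; simp; ring
    rw [hre, abs_div, abs_of_pos hD, div_lt_iff₀ hD]
    have h2 := hC₂ x
    have h8 : 8 * C₂ < M := by
      have h0 : (0:ℝ) ≤ (2 * (d:ℝ) + 2) * C₂ := by positivity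
      rw [hB] at hM; nlinarith
    nlinarith
  · -- third inequality
    have hre : x L * eval x P / (M * s ^ (d + 1)) = eval x R / (M * s ^ (d + 1)) := by
      rw [hR]; simp
    rw [hre, abs_div, abs_of_pos hD, div_lt_iff₀ hD]
    have h3 := hC₃ x
    have h2' : 2 * C₃ < M := by
      have h0 : (0:ℝ) ≤ (2 * (d:ℝ) + 2) * C₂ := by positivity
      rw [hB] at hM; nlinarith
    nlinarith
  · -- fourth inequality
    set w : (Fin (n + 1) → ℝ) → ℝ := fun y => (1 + ∑ k, y k ^ 2) ^ (d + 1) with hw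
    have hevalG : ∀ y : Fin (n + 1) → ℝ, eval y (T ^ (d + 1)) = w y := by
      intro y; rw [hw, hT]; simp [eval_sum]
    have hwx : w x = s ^ (d + 1) := by rw [hw, hs]
    have hwxpos : 0 < w x := by rw [hwx]; positivity
    set LG := ∑ j, eval x (pderiv j (T ^ (d + 1))) •
        (ContinuousLinearMap.proj j : (Fin (n + 1) → ℝ) →L[ℝ] ℝ) with hLG
    set LR := ∑ j, eval x (pderiv j R) •
        (ContinuousLinearMap.proj j : (Fin (n + 1) → ℝ) →L[ℝ] ℝ) with hLR
    have hwd : HasFDerivAt w LG x := by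
      have h := eval_hasFDerivAt (T ^ (d + 1)) x
      have : (fun y : Fin (n + 1) → ℝ => eval y (T ^ (d + 1))) = w := funext hevalG
      rwa [this] at h
    have hRd : HasFDerivAt (fun y : Fin (n + 1) → ℝ => eval y R) LR x :=
      eval_hasFDerivAt R x
    have hinv : HasFDerivAt (fun y : Fin (n + 1) → ℝ => (w y)⁻¹)
        ((-(w x ^ 2)⁻¹) • LG) x := by
      have := (hasDerivAt_inv (ne_of_gt hwxpos)).comp_hasFDerivAt x hwd
      exact this
    have hmul := hRd.mul hinv
    have hfinal := hmul.const_mul M⁻¹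
    have hfun : (fun y : Fin (n + 1) → ℝ =>
          y L * eval y P / (M * (1 + ∑ k, y k ^ 2) ^ (d + 1)))
        = fun y => M⁻¹ * (eval y R * (w y)⁻¹) := by
      funext y
      have hy : (0:ℝ) < (1 + ∑ k, y k ^ 2) ^ (d + 1) := by positivity
      rw [hw, hR]
      simp only [eval_mul, eval_X]
      field_simp
    rw [hfun, (show HasFDerivAt (fun y => M⁻¹ * (eval y R * (w y)⁻¹)) _ x from hfinal).fderiv]
    have happ : (M⁻¹ • (eval x R • ((-(w x ^ 2)⁻¹) • LG) + (w x)⁻¹ • LR))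
        (Pi.single L 1)
        = M⁻¹ * (eval x R * (-(w x ^ 2)⁻¹ * eval x (pderiv L (T ^ (d + 1))))
            + (w x)⁻¹ * eval x (pderiv L R)) := by
      simp only [ContinuousLinearMap.smul_apply, ContinuousLinearMap.add_apply,
        smul_eq_mul, hLG, hLR, evalCLM_single]
    rw [happ]
    -- compute the derivative of T ^ (d+1)
    have hpT : pderiv L T = 2 * X L := by
      rw [hT]
      rw [map_add, map_sum]
      simp only [pderiv_one, pderiv_pow, pderiv_X, zero_add]
      rw [Finset.sum_eq_single L]
      · simp [Pi.single_eq_same]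
      · intro j _ hj
        rw [Pi.single_eq_of_ne hj, mul_zero]
      · simp
    have hE : eval x (pderiv L (T ^ (d + 1))) = ((d:ℝ) + 1) * s ^ d * (2 * x L) := by
      rw [pderiv_pow, hpT]
      have hTd : (d + 1 - 1) = d := by omega
      rw [hTd]
      have hevalT : eval x T = s := by rw [hT, hs]; simp [eval_sum]
      simp [hevalT]
    rw [hE, hwx]
    clear happ hfinal hmul hinv hwd hRd hfun hpT hE hevalG
    clear hLG hLR LG LR hwxpos hwx hw w
    -- now the numeric estimate
    set q : ℝ := s ^ (d + 1) with hq
    have hq1 : (1:ℝ) ≤ q := hsd1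
    have hqpos : (0:ℝ) < q := by linarith
    have hqp : q = s ^ d * s := by rw [hq, pow_succ]
    have hp1 : (1:ℝ) ≤ s ^ d := one_le_pow₀ hs1
    have h2a : |x L * eval x R| ≤ C₂ * q := by
      have := hC₂ x
      have hSx : eval x S₂ = x L * eval x R := by rw [hS₂]; simp
      rw [hSx] at this; exact this
    have h4a : |eval x (pderiv L R)| ≤ C₄ * q := hC₄ x
    have hA : |eval x R * (-(q ^ 2)⁻¹ * (((d:ℝ) + 1) * s ^ d * (2 * x L)))|
        ≤ 2 * ((d:ℝ) + 1) * C₂ := by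
      have hrw : eval x R * (-(q ^ 2)⁻¹ * (((d:ℝ) + 1) * s ^ d * (2 * x L)))
          = -((((d:ℝ) + 1) * s ^ d * 2 * (q ^ 2)⁻¹) * (x L * eval x R)) := by ring
      rw [hrw, abs_neg, abs_mul]
      have hcnn : (0:ℝ) ≤ ((d:ℝ) + 1) * s ^ d * 2 * (q ^ 2)⁻¹ := by positivity
      rw [abs_of_nonneg hcnn]
      have hle : (((d:ℝ) + 1) * s ^ d * 2 * (q ^ 2)⁻¹) * |x L * eval x R|
          ≤ (((d:ℝ) + 1) * s ^ d * 2 * (q ^ 2)⁻¹) * (C₂ * q) :=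
        mul_le_mul_of_nonneg_left h2a hcnn
      refine hle.trans ?_
      have hkey : s ^ d * q ≤ q ^ 2 := by nlinarith
      have h1 : s ^ d * q / q ^ 2 ≤ 1 := (div_le_one (by positivity)).2 hkey
      calc (((d:ℝ) + 1) * s ^ d * 2 * (q ^ 2)⁻¹) * (C₂ * q)
          = (2 * ((d:ℝ) + 1) * C₂) * (s ^ d * q / q ^ 2) := by ring
        _ ≤ (2 * ((d:ℝ) + 1) * C₂) * 1 := by
            exact mul_le_mul_of_nonneg_left h1 (by positivity)
        _ = 2 * ((d:ℝ) + 1) * C₂ := mul_one _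
    have hBv : |q⁻¹ * eval x (pderiv L R)| ≤ C₄ := by
      rw [abs_mul, abs_of_pos (by positivity : (0:ℝ) < q⁻¹)]
      calc q⁻¹ * |eval x (pderiv L R)| = |eval x (pderiv L R)| / q := by ring
        _ ≤ C₄ := (div_le_iff₀ hqpos).2 (by linarith [h4a])
    have hsum : |eval x R * (-(q ^ 2)⁻¹ * (((d:ℝ) + 1) * s ^ d * (2 * x L)))
        + q⁻¹ * eval x (pderiv L R)| ≤ 2 * ((d:ℝ) + 1) * C₂ + C₄ :=
      (abs_add_le _ _).trans (add_le_add hA hBv)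
    rw [abs_mul, abs_of_pos (by positivity : (0:ℝ) < M⁻¹)]
    have h4' : 4 * (2 * ((d:ℝ) + 1) * C₂ + C₄) < M := by
      rw [hB] at hM; nlinarith
    have hfin : M⁻¹ * |eval x R * (-(q ^ 2)⁻¹ * (((d:ℝ) + 1) * s ^ d * (2 * x L)))
        + q⁻¹ * eval x (pderiv L R)| ≤ M⁻¹ * (2 * ((d:ℝ) + 1) * C₂ + C₄) :=
      mul_le_mul_of_nonneg_left hsum (by positivity)
    have habsnn : (0:ℝ) ≤ 2 * ((d:ℝ) + 1) * C₂ + C₄ := by positivity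
    calc M⁻¹ * |eval x R * (-(q ^ 2)⁻¹ * (((d:ℝ) + 1) * s ^ d * (2 * x L)))
        + q⁻¹ * eval x (pderiv L R)| ≤ M⁻¹ * (2 * ((d:ℝ) + 1) * C₂ + C₄) := hfin
      _ < 1 / 4 := by
        have hlt : (2 * ((d:ℝ) + 1) * C₂ + C₄) < M / 4 := by linarith
        calc M⁻¹ * (2 * ((d:ℝ) + 1) * C₂ + C₄) < M⁻¹ * (M / 4) :=
              mul_lt_mul_of_pos_left hlt (by positivity)
          _ = 1 / 4 := by field_simp
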